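/- Let P be a double histogram and let v, w ∈ V(P) be two vertices on the same side of the base line. Then the intervals I(v) and I(w) form a laminar pair: either I(v) ∩ I(w) = ∅, or I(v) ⊆ I(w), or I(w) ⊆ I(v). -/

import Mathlib

open Classical Set

noncomputable section

/-- A *double histogram*: an `x`-monotone orthogonal polygon in general position whose
base line lies on the `x`-axis.  It is described by its bottom columns (over the
breakpoints `xs` with depths `d < 0`) and its top columns (over the breakpoints `ys`
with heights `h > 0`).  A *simple histogram* is the special case `n = 1`, where the
upper boundary is the single (base) edge at height `h 0`. -/
structure DoubleHistogram where
  m : ℕ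
  n : ℕ
  hm : 0 < m
  hn : 0 < n
  xs : Fin (m + 1) → ℝ
  ys : Fin (n + 1) → ℝ
  d : Fin m → ℝ
  h : Fin n → ℝ
  xs_mono : StrictMono xs
  ys_mono : StrictMono ys
  left_eq : ys 0 = xs 0
  right_eq : ys (Fin.last n) = xs (Fin.last m)
  d_neg : ∀ i, d i < 0
  h_pos : ∀ j, 0 < h j
  /-- general position: no three vertices on a horizontal line -/
  d_inj : Function.Injective d
  h_inj : Function.Injective h
  /-- general position: no three vertices on a vertical line -/
  gen_pos : ∀ (i : Fin (m + 1)) (j : Fin (n + 1)), xs i = ys j →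
      (i = 0 ∧ j = 0) ∨ (i = Fin.last m ∧ j = Fin.last n)

/-- Among the reals in `A`, the one of minimum absolute value
(i.e. "closest to the base line"). -/
def closestToBase (A : Set ℝ) : ℝ :=
  sSup {y | y ∈ A ∧ ∀ y' ∈ A, |y| ≤ |y'|}

/-- The leftmost point of `S` among those minimizing the distance `|y|` to the base line. -/
def leftmostLowest (S : Set (ℝ × ℝ)) : ℝ × ℝ :=
  (sInf {x | ∃ y, (x, y) ∈ S ∧ ∀ q ∈ S, |y| ≤ |q.2|},
    closestToBase {y | (sInf {x | ∃ y', (x, y') ∈ S ∧ ∀ q ∈ S, |y'| ≤ |q.2|}, y) ∈ S})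

namespace DoubleHistogram

variable (H : DoubleHistogram)

/-- The polygon `P`, as a closed region of the plane. -/
def region : Set (ℝ × ℝ) :=
  (⋃ i : Fin H.m, Icc (H.xs i.castSucc) (H.xs i.succ) ×ˢ Icc (H.d i) 0) ∪
    ⋃ j : Fin H.n, Icc (H.ys j.castSucc) (H.ys j.succ) ×ˢ Icc 0 (H.h j)

/-- The vertex set `V(P)`. -/
def verts : Set (ℝ × ℝ) :=
  (⋃ i : Fin H.m,
      ({(H.xs i.castSucc, H.d i), (H.xs i.succ, H.d i)} : Set (ℝ × ℝ))) ∪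
    ⋃ j : Fin H.n,
      ({(H.ys j.castSucc, H.h j), (H.ys j.succ, H.h j)} : Set (ℝ × ℝ))

/-- `p` and `q` are co-visible: the axis-parallel rectangle they span lies in `P`. -/
def covisible (p q : ℝ × ℝ) : Prop :=
  Icc (min p.1 q.1) (max p.1 q.1) ×ˢ Icc (min p.2 q.2) (max p.2 q.2) ⊆ H.region

lemma covisible_symm {p q : ℝ × ℝ} (hpq : H.covisible p q) : H.covisible q p := by
  unfold covisible at hpq ⊢
  rwa [min_comm q.1 p.1, max_comm q.1 p.1, min_comm q.2 p.2, max_comm q.2 p.2]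

/-- The (unweighted) visibility graph `G(P)` on the vertices of `P`. -/
def visGraph : SimpleGraph ↥H.verts where
  Adj u v := u ≠ v ∧ H.covisible ↑u ↑v
  symm := ⟨fun _ _ hu => ⟨hu.1.symm, H.covisible_symm hu.2⟩⟩
  loopless := ⟨fun _ hu => hu.1 rfl⟩

/-- The closed neighborhood `N(v)`: `v` together with the vertices it sees. -/
def Nbr (v : ℝ × ℝ) : Set (ℝ × ℝ) :=
  {w | w ∈ H.verts ∧ (w = v ∨ H.covisible v w)}

/-- The abscissa where the leftward horizontal ray from `v` hits the boundary of `P`. -/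
def lhit (v : ℝ × ℝ) : ℝ :=
  sInf {x | x ≤ v.1 ∧ Icc x v.1 ×ˢ ({v.2} : Set ℝ) ⊆ H.region}

/-- The abscissa where the rightward horizontal ray from `v` hits the boundary of `P`. -/
def rhit (v : ℝ × ℝ) : ℝ :=
  sSup {x | v.1 ≤ x ∧ Icc v.1 x ×ˢ ({v.2} : Set ℝ) ⊆ H.region}

/-- The `y`-coordinate, among the vertices of `P` with abscissa `x` lying on the same side
of the base line as `side`, of the one closest to the base line (i.e. the endpoint of the
vertical edge at `x` closer to the base line). -/
def nearY (x : ℝ) (side : ℝ) : ℝ :=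
  if side < 0 then sSup {y | y < 0 ∧ (x, y) ∈ H.verts}
  else sInf {y | 0 < y ∧ (x, y) ∈ H.verts}

/-- The left point `ℓ(v)` (double-histogram version): if the leftward ray from `v` hits the
left boundary then the hit point, otherwise the endpoint of the hit vertical edge closer to
the base line. -/
def lpt (v : ℝ × ℝ) : ℝ × ℝ :=
  if H.lhit v = H.xs 0 then (H.xs 0, v.2) else (H.lhit v, H.nearY (H.lhit v) v.2)

/-- The right point `r(v)` (double-histogram version). -/
def rpt (v : ℝ × ℝ) : ℝ × ℝ :=
  if H.rhit v = H.xs (Fin.last H.m) then (H.xs (Fin.last H.m), v.2)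
  else (H.rhit v, H.nearY (H.rhit v) v.2)

/-- The left base vertex (for a simple histogram, i.e. `n = 1`). -/
def baseL : ℝ × ℝ := (H.xs 0, H.h ⟨0, H.hn⟩)

/-- The right base vertex (for a simple histogram, i.e. `n = 1`). -/
def baseR : ℝ × ℝ := (H.xs (Fin.last H.m), H.h ⟨0, H.hn⟩)

/-- The left point `ℓ(v)` (simple-histogram version): if the leftward ray from `v` hits the
left boundary then the left base vertex, otherwise the endpoint of the hit vertical edge
closer to the base edge. -/
def lptS (v : ℝ × ℝ) : ℝ × ℝ :=
  if H.lhit v = H.xs 0 then H.baseL else (H.lhit v, H.nearY (H.lhit v) v.2)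

/-- The right point `r(v)` (simple-histogram version). -/
def rptS (v : ℝ × ℝ) : ℝ × ℝ :=
  if H.rhit v = H.xs (Fin.last H.m) then H.baseR
  else (H.rhit v, H.nearY (H.rhit v) v.2)

/-- The interval `[p, q]`: all vertices of `P` between `p` and `q`. -/
def ivl (p q : ℝ × ℝ) : Set (ℝ × ℝ) :=
  {u | u ∈ H.verts ∧ p.1 ≤ u.1 ∧ u.1 ≤ q.1}

/-- The interval `I(v) = [ℓ(v), r(v)]` of a vertex (double-histogram version). -/
def Iv (v : ℝ × ℝ) : Set (ℝ × ℝ) := H.ivl (H.lpt v) (H.rpt v)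

/-- The interval `I(v) = [ℓ(v), r(v)]` of a vertex (simple-histogram version). -/
def IvS (v : ℝ × ℝ) : Set (ℝ × ℝ) := H.ivl (H.lptS v) (H.rptS v)

/-- The corresponding vertex `cv(v)`: the unique other vertex sharing a horizontal edge
(equivalently, by general position, the `y`-coordinate) with `v`. -/
def cv (v : ℝ × ℝ) : ℝ × ℝ :=
  (sSup {x | (x, v.2) ∈ H.verts ∧ x ≠ v.1}, v.2)

/-- `v` is a left vertex: the left endpoint of its horizontal edge. -/
def IsLeftVert (v : ℝ × ℝ) : Prop :=
  (∃ i : Fin H.m, v = (H.xs i.castSucc, H.d i)) ∨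
    ∃ j : Fin H.n, v = (H.ys j.castSucc, H.h j)

/-- `v` is a right vertex: the right endpoint of its horizontal edge. -/
def IsRightVert (v : ℝ × ℝ) : Prop :=
  (∃ i : Fin H.m, v = (H.xs i.succ, H.d i)) ∨
    ∃ j : Fin H.n, v = (H.ys j.succ, H.h j)

/-- `v` is an `ℓ`-reflex vertex (a left vertex with interior angle `3π/2`). -/
def IsLReflex (v : ℝ × ℝ) : Prop :=
  (∃ i : Fin H.m, ∃ _ : 0 < (i : ℕ),
      v = (H.xs i.castSucc, H.d i) ∧
        H.d ⟨(i : ℕ) - 1, lt_of_le_of_lt (Nat.sub_le _ _) i.isLt⟩ < H.d i) ∨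
    ∃ j : Fin H.n, ∃ _ : 0 < (j : ℕ),
      v = (H.ys j.castSucc, H.h j) ∧
        H.h j < H.h ⟨(j : ℕ) - 1, lt_of_le_of_lt (Nat.sub_le _ _) j.isLt⟩

/-- `v` is an `r`-reflex vertex (a right vertex with interior angle `3π/2`). -/
def IsRReflex (v : ℝ × ℝ) : Prop :=
  (∃ i : Fin H.m, ∃ hi : (i : ℕ) + 1 < H.m,
      v = (H.xs i.succ, H.d i) ∧ H.d ⟨(i : ℕ) + 1, hi⟩ < H.d i) ∨
    ∃ j : Fin H.n, ∃ hj : (j : ℕ) + 1 < H.n,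
      v = (H.ys j.succ, H.h j) ∧ H.h j < H.h ⟨(j : ℕ) + 1, hj⟩

/-- `v` is a reflex vertex. -/
def IsReflex (v : ℝ × ℝ) : Prop := H.IsLReflex v ∨ H.IsRReflex v

/-- The near dominator `nd(s,t)`: for `t` strictly right of `s`, the rightmost vertex of
`N(s)` to the left of `t`, ties broken towards the base line (symmetric otherwise). -/
def nd (s t : ℝ × ℝ) : ℝ × ℝ :=
  if s.1 < t.1 then
    let nx := sSup {x | (∃ y, (x, y) ∈ H.Nbr s) ∧ x ≤ t.1}
    (nx, closestToBase {y | (nx, y) ∈ H.Nbr s})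
  else
    let nx := sInf {x | (∃ y, (x, y) ∈ H.Nbr s) ∧ t.1 ≤ x}
    (nx, closestToBase {y | (nx, y) ∈ H.Nbr s})

/-- The far dominator `fd(s,t)`: for `t` strictly right of `s`, the leftmost vertex of
`N(s)` to the right of `t`, ties broken towards the base line; if there is no such vertex,
the point `r(s)` (symmetric otherwise). -/
def fd (s t : ℝ × ℝ) : ℝ × ℝ :=
  if s.1 < t.1 then
    if ∃ w ∈ H.Nbr s, t.1 ≤ w.1 then
      let nx := sInf {x | (∃ y, (x, y) ∈ H.Nbr s) ∧ t.1 ≤ x}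
      (nx, closestToBase {y | (nx, y) ∈ H.Nbr s})
    else H.rpt s
  else
    if ∃ w ∈ H.Nbr s, w.1 ≤ t.1 then
      let nx := sSup {x | (∃ y, (x, y) ∈ H.Nbr s) ∧ x ≤ t.1}
      (nx, closestToBase {y | (nx, y) ∈ H.Nbr s})
    else H.lpt s

/-- The sequence `a^i(s)`: `a^0(s) = s`, and `a^i(s)` is the leftmost vertex of
`A^i(s) = {v ∈ N(s) : ℓ(v)_x < ℓ(a^{i-1}(s))_x}` (ties towards the base line),
or `a^{i-1}(s)` if `A^i(s)` is empty. -/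
def aSeq (s : ℝ × ℝ) : ℕ → ℝ × ℝ := fun k =>
  Nat.rec (motive := fun _ => ℝ × ℝ) s
    (fun _ prev =>
      let A : Set (ℝ × ℝ) := {v | v ∈ H.Nbr s ∧ (H.lpt v).1 < (H.lpt prev).1}
      if A = ∅ then prev
      else
        let ax := sInf {x | ∃ y, (x, y) ∈ A}
        (ax, closestToBase {y | (ax, y) ∈ A}))
    k

/-- The sequence `b^i(s)`: `b^0(s) = s`, and `b^i(s)` is the rightmost vertex of
`B^i(s) = {v ∈ N(s) : r(v)_x > r(b^{i-1}(s))_x}` (ties towards the base line),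
or `b^{i-1}(s)` if `B^i(s)` is empty. -/
def bSeq (s : ℝ × ℝ) : ℕ → ℝ × ℝ := fun k =>
  Nat.rec (motive := fun _ => ℝ × ℝ) s
    (fun _ prev =>
      let B : Set (ℝ × ℝ) := {v | v ∈ H.Nbr s ∧ (H.rpt prev).1 < (H.rpt v).1}
      if B = ∅ then prev
      else
        let bx := sSup {x | ∃ y, (x, y) ∈ B}
        (bx, closestToBase {y | (bx, y) ∈ B}))
    k

/-- The pair of the `k`-th bottom dominator `bd^k(s)` and `k`-th top dominator `td^k(s)`:
`bd^0(s) = td^0(s) = s`; for `k > 0`, with `I^k(s) = I(bd^{k-1}(s)) ∪ I(td^{k-1}(s))`,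
`bd^k(s)` is the leftmost vertex of `I^k(s)⁻` minimizing the distance to the base line,
and `td^k(s)` the leftmost vertex of `I^k(s)⁺` minimizing the distance to the base line;
if one of the two sets is empty, the corresponding dominator equals the other one. -/
def bdtd (s : ℝ × ℝ) : ℕ → (ℝ × ℝ) × (ℝ × ℝ) := fun k =>
  Nat.rec (motive := fun _ => (ℝ × ℝ) × (ℝ × ℝ)) (s, s)
    (fun _ p =>
      let J : Set (ℝ × ℝ) := H.Iv p.1 ∪ H.Iv p.2
      let Jm : Set (ℝ × ℝ) := {v | v ∈ J ∧ v.2 < 0}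
      let Jp : Set (ℝ × ℝ) := {v | v ∈ J ∧ 0 < v.2}
      if Jm = ∅ then (leftmostLowest Jp, leftmostLowest Jp)
      else if Jp = ∅ then (leftmostLowest Jm, leftmostLowest Jm)
      else (leftmostLowest Jm, leftmostLowest Jp))
    k

/-- The `k`-th interval `I^k(s)`: `I^0(s) = {s}` and
`I^{k+1}(s) = I(bd^k(s)) ∪ I(td^k(s))`. -/
def Ipow (s : ℝ × ℝ) : ℕ → Set (ℝ × ℝ) := fun k =>
  Nat.rec (motive := fun _ => Set (ℝ × ℝ)) {s}
    (fun k _ => H.Iv (H.bdtd s k).1 ∪ H.Iv (H.bdtd s k).2) k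

/-- `w` lies on a shortest path from `s` to `t` in the visibility graph. -/
def OnShortestPath (s t w : ↥H.verts) : Prop :=
  ∃ p : H.visGraph.Walk s t, p.length = H.visGraph.dist s t ∧ w ∈ p.support

end DoubleHistogram

/-- A routing scheme for a graph `G`: every vertex carries a binary label and a binary
routing table, and the routing function maps (link table of the current vertex, routing
table of the current vertex, label of the target, current header) to the next vertex
together with the new header. -/
structure RoutingScheme {V : Type} (G : SimpleGraph V) where
  lab : V → List Bool
  tab : V → List Bool
  route : Set (List Bool) → List Bool → List Bool → List Bool → V × List Bool

namespace RoutingScheme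

variable {V : Type} {G : SimpleGraph V} (R : RoutingScheme G)

/-- One routing step at vertex `p` with header `h`, towards the target `t`: the routing
function is applied to the link table of `p` (the labels of its closed neighborhood),
the routing table of `p`, the label of `t` and the header `h`. -/
def step (t p : V) (h : List Bool) : V × List Bool :=
  R.route (R.lab '' {w | w = p ∨ G.Adj p w}) (R.tab p) (R.lab t) h

/-- The routing sequence from `s` towards `t`, starting with the empty header. -/
def seq (s t : V) : ℕ → V × List Bool := fun k =>
  Nat.rec (motive := fun _ => V × List Bool) (s, ([] : List Bool))
    (fun _ q => R.step t q.1 q.2) k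

end RoutingScheme

namespace DoubleHistogram

variable (H : DoubleHistogram)

lemma mem_region_iff {p : ℝ × ℝ} : p ∈ H.region ↔
    (∃ i : Fin H.m, (H.xs i.castSucc ≤ p.1 ∧ p.1 ≤ H.xs i.succ) ∧ H.d i ≤ p.2 ∧ p.2 ≤ 0) ∨
    (∃ j : Fin H.n, (H.ys j.castSucc ≤ p.1 ∧ p.1 ≤ H.ys j.succ) ∧ 0 ≤ p.2 ∧ p.2 ≤ H.h j) := by
  simp only [region, mem_union, mem_iUnion, Set.mem_prod, mem_Icc]

lemma region_closed : IsClosed H.region := by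
  unfold region
  exact IsClosed.union (isClosed_iUnion_of_finite fun i => isClosed_Icc.prod isClosed_Icc)
    (isClosed_iUnion_of_finite fun j => isClosed_Icc.prod isClosed_Icc)

lemma region_x {p : ℝ × ℝ} (hp : p ∈ H.region) :
    H.xs 0 ≤ p.1 ∧ p.1 ≤ H.xs (Fin.last H.m) := by
  rcases (H.mem_region_iff).mp hp with ⟨i, ⟨h1, h2⟩, _⟩ | ⟨j, ⟨h1, h2⟩, _⟩
  · exact ⟨le_trans (H.xs_mono.monotone (Fin.zero_le _)) h1,
      le_trans h2 (H.xs_mono.monotone (Fin.le_last _))⟩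
  · constructor
    · calc H.xs 0 = H.ys 0 := H.left_eq.symm
        _ ≤ H.ys j.castSucc := H.ys_mono.monotone (Fin.zero_le _)
        _ ≤ p.1 := h1
    · calc p.1 ≤ H.ys j.succ := h2
        _ ≤ H.ys (Fin.last H.n) := H.ys_mono.monotone (Fin.le_last _)
        _ = H.xs (Fin.last H.m) := H.right_eq

lemma verts_sub_region {v : ℝ × ℝ} (hv : v ∈ H.verts) : v ∈ H.region := by
  rcases hv with hv | hv <;>
    simp only [mem_iUnion, mem_insert_iff, mem_singleton_iff] at hv <;>
    obtain ⟨i, hv | hv⟩ := hv <;> subst hv <;> rw [mem_region_iff]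
  · exact Or.inl ⟨i, ⟨le_refl _, (H.xs_mono (Fin.castSucc_lt_succ (i := i))).le⟩,
      le_refl _, (H.d_neg i).le⟩
  · exact Or.inl ⟨i, ⟨(H.xs_mono (Fin.castSucc_lt_succ (i := i))).le, le_refl _⟩,
      le_refl _, (H.d_neg i).le⟩
  · exact Or.inr ⟨i, ⟨le_refl _, (H.ys_mono (Fin.castSucc_lt_succ (i := i))).le⟩,
      (H.h_pos i).le, le_refl _⟩
  · exact Or.inr ⟨i, ⟨(H.ys_mono (Fin.castSucc_lt_succ (i := i))).le, le_refl _⟩,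
      (H.h_pos i).le, le_refl _⟩

lemma shrink {x y y' : ℝ} (h : (x, y') ∈ H.region) (h1 : min 0 y' ≤ y)
    (h2 : y ≤ max 0 y') : (x, y) ∈ H.region := by
  rw [mem_region_iff] at h ⊢
  rcases h with ⟨i, hx, hy⟩ | ⟨j, hx, hy⟩
  · have e1 : min 0 y' = y' := min_eq_right hy.2
    have e2 : max 0 y' = 0 := max_eq_left hy.2
    rw [e1] at h1; rw [e2] at h2
    exact Or.inl ⟨i, hx, le_trans hy.1 h1, h2⟩
  · have e1 : min 0 y' = 0 := min_eq_left hy.1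
    have e2 : max 0 y' = y' := max_eq_right hy.1
    rw [e1] at h1; rw [e2] at h2
    exact Or.inr ⟨j, hx, h1, le_trans h2 hy.2⟩

lemma mem_lset_self {v : ℝ × ℝ} (hv : v ∈ H.region) :
    v.1 ∈ {x | x ≤ v.1 ∧ Icc x v.1 ×ˢ ({v.2} : Set ℝ) ⊆ H.region} := by
  refine ⟨le_refl _, ?_⟩
  rintro ⟨a, b⟩ ⟨ha, hb⟩
  simp only [mem_Icc] at ha
  simp only [mem_singleton_iff] at hb
  have : a = v.1 := le_antisymm ha.2 ha.1
  subst this; subst hb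
  exact hv

lemma lset_bddBelow (v : ℝ × ℝ) :
    BddBelow {x | x ≤ v.1 ∧ Icc x v.1 ×ˢ ({v.2} : Set ℝ) ⊆ H.region} := by
  refine ⟨H.xs 0, fun x hx => ?_⟩
  have : (x, v.2) ∈ H.region := hx.2 (Set.mem_prod.mpr ⟨⟨le_refl x, hx.1⟩, rfl⟩)
  exact (H.region_x this).1

lemma mem_rset_self {v : ℝ × ℝ} (hv : v ∈ H.region) :
    v.1 ∈ {x | v.1 ≤ x ∧ Icc v.1 x ×ˢ ({v.2} : Set ℝ) ⊆ H.region} := by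
  refine ⟨le_refl _, ?_⟩
  rintro ⟨a, b⟩ ⟨ha, hb⟩
  simp only [mem_Icc] at ha
  simp only [mem_singleton_iff] at hb
  have : a = v.1 := le_antisymm ha.2 ha.1
  subst this; subst hb
  exact hv

lemma rset_bddAbove (v : ℝ × ℝ) :
    BddAbove {x | v.1 ≤ x ∧ Icc v.1 x ×ˢ ({v.2} : Set ℝ) ⊆ H.region} := by
  refine ⟨H.xs (Fin.last H.m), fun x hx => ?_⟩
  have : (x, v.2) ∈ H.region := hx.2 (Set.mem_prod.mpr ⟨⟨hx.1, le_refl x⟩, rfl⟩)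
  exact (H.region_x this).2

lemma lhit_le {v : ℝ × ℝ} (hv : v ∈ H.region) : H.lhit v ≤ v.1 :=
  csInf_le (H.lset_bddBelow v) (H.mem_lset_self hv)

lemma le_rhit {v : ℝ × ℝ} (hv : v ∈ H.region) : v.1 ≤ H.rhit v :=
  le_csSup (H.rset_bddAbove v) (H.mem_rset_self hv)

lemma seg_left {v : ℝ × ℝ} (hv : v ∈ H.region) {t : ℝ} (h1 : H.lhit v ≤ t)
    (h2 : t ≤ v.1) : (t, v.2) ∈ H.region := by
  have hmid : ∀ s : ℝ, H.lhit v < s → s ≤ v.1 → (s, v.2) ∈ H.region := by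
    intro s hs1 hs2
    have hx : ∃ x ∈ {x | x ≤ v.1 ∧ Icc x v.1 ×ˢ ({v.2} : Set ℝ) ⊆ H.region}, x < s := by
      by_contra hc
      push_neg at hc
      have : s ≤ H.lhit v := le_csInf ⟨v.1, H.mem_lset_self hv⟩ hc
      linarith
    obtain ⟨x, hxS, hxs⟩ := hx
    exact hxS.2 (Set.mem_prod.mpr ⟨⟨hxs.le, hs2⟩, rfl⟩)
  rcases eq_or_lt_of_le h1 with h1 | h1
  · subst h1
    rcases eq_or_lt_of_le h2 with h2 | h2
    · rw [h2]; exact hv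
    · have hcl : IsClosed {x : ℝ | (x, v.2) ∈ H.region} :=
        IsClosed.preimage (continuous_id.prodMk continuous_const) H.region_closed
      have hsub : Icc (H.lhit v) v.1 ⊆ {x : ℝ | (x, v.2) ∈ H.region} := by
        rw [← closure_Ioc (ne_of_lt h2)]
        exact closure_minimal (fun s hs => hmid s hs.1 hs.2) hcl
      exact hsub ⟨le_refl _, h2.le⟩
  · exact hmid t h1 h2

lemma seg_right {v : ℝ × ℝ} (hv : v ∈ H.region) {t : ℝ} (h1 : v.1 ≤ t)
    (h2 : t ≤ H.rhit v) : (t, v.2) ∈ H.region := by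
  have hmid : ∀ s : ℝ, v.1 ≤ s → s < H.rhit v → (s, v.2) ∈ H.region := by
    intro s hs1 hs2
    have hx : ∃ x ∈ {x | v.1 ≤ x ∧ Icc v.1 x ×ˢ ({v.2} : Set ℝ) ⊆ H.region}, s < x := by
      by_contra hc
      push_neg at hc
      have : H.rhit v ≤ s := csSup_le ⟨v.1, H.mem_rset_self hv⟩ hc
      linarith
    obtain ⟨x, hxS, hxs⟩ := hx
    exact hxS.2 (Set.mem_prod.mpr ⟨⟨hs1, hxs.le⟩, rfl⟩)
  rcases eq_or_lt_of_le h2 with h2 | h2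
  · subst h2
    rcases eq_or_lt_of_le h1 with h1 | h1
    · rw [← h1]; exact hv
    · have hcl : IsClosed {x : ℝ | (x, v.2) ∈ H.region} :=
        IsClosed.preimage (continuous_id.prodMk continuous_const) H.region_closed
      have hsub : Icc v.1 (H.rhit v) ⊆ {x : ℝ | (x, v.2) ∈ H.region} := by
        rw [← closure_Ico (ne_of_lt h1)]
        exact closure_minimal (fun s hs => hmid s hs.1 hs.2) hcl
      exact hsub ⟨h1.le, le_refl _⟩
  · exact hmid t h1 h2

lemma seg {v : ℝ × ℝ} (hv : v ∈ H.region) {t : ℝ} (h1 : H.lhit v ≤ t)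
    (h2 : t ≤ H.rhit v) : (t, v.2) ∈ H.region := by
  rcases le_total t v.1 with h | h
  · exact H.seg_left hv h1 h
  · exact H.seg_right hv h h2

lemma key {v w : ℝ × ℝ} (hv : v ∈ H.region) (hw : w ∈ H.region)
    (hmin : min 0 w.2 ≤ v.2) (hmax : v.2 ≤ max 0 w.2)
    {x0 : ℝ} (h1 : H.lhit v ≤ x0) (h2 : x0 ≤ H.rhit v)
    (h3 : H.lhit w ≤ x0) (h4 : x0 ≤ H.rhit w) :
    H.lhit v ≤ H.lhit w ∧ H.rhit w ≤ H.rhit v := by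
  constructor
  · have hmem : min (H.lhit v) (H.lhit w) ∈
        {x | x ≤ v.1 ∧ Icc x v.1 ×ˢ ({v.2} : Set ℝ) ⊆ H.region} := by
      refine ⟨le_trans (min_le_left _ _) (H.lhit_le hv), ?_⟩
      rintro ⟨a, b⟩ ⟨ha, hb⟩
      simp only [mem_Icc] at ha
      simp only [mem_singleton_iff] at hb
      subst hb
      rcases le_or_gt (H.lhit v) a with h | h
      · exact H.seg_left hv h ha.2
      · have hLw : H.lhit w ≤ a := by
          rcases min_cases (H.lhit v) (H.lhit w) with ⟨e, _⟩ | ⟨e, he⟩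
          · exfalso; rw [e] at ha; linarith [ha.1]
          · rw [e] at ha; exact ha.1
        have hRw : a ≤ H.rhit w := le_trans h.le (le_trans h1 h4)
        exact H.shrink (H.seg hw hLw hRw) hmin hmax
    have := csInf_le (H.lset_bddBelow v) hmem
    exact le_trans this (min_le_right _ _)
  · have hmem : max (H.rhit v) (H.rhit w) ∈
        {x | v.1 ≤ x ∧ Icc v.1 x ×ˢ ({v.2} : Set ℝ) ⊆ H.region} := by
      refine ⟨le_trans (H.le_rhit hv) (le_max_left _ _), ?_⟩
      rintro ⟨a, b⟩ ⟨ha, hb⟩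
      simp only [mem_Icc] at ha
      simp only [mem_singleton_iff] at hb
      subst hb
      rcases le_or_gt a (H.rhit v) with h | h
      · exact H.seg_right hv ha.1 h
      · have hRw : a ≤ H.rhit w := by
          rcases max_cases (H.rhit v) (H.rhit w) with ⟨e, _⟩ | ⟨e, he⟩
          · exfalso; rw [e] at ha; linarith [ha.2]
          · rw [e] at ha; exact ha.2
        have hLw : H.lhit w ≤ a := le_trans (le_trans h3 h2) h.le
        exact H.shrink (H.seg hw hLw hRw) hmin hmax
    have := le_csSup (H.rset_bddAbove v) hmem
    exact le_trans (le_max_right _ _) this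

lemma lpt_fst (v : ℝ × ℝ) : (H.lpt v).1 = H.lhit v := by
  unfold lpt
  split_ifs with h
  · exact h.symm
  · rfl

lemma rpt_fst (v : ℝ × ℝ) : (H.rpt v).1 = H.rhit v := by
  unfold rpt
  split_ifs with h
  · exact h.symm
  · rfl

end DoubleHistogram

/-- In a double histogram, the intervals of two vertices on the same side
of the base line form a laminar pair. -/
theorem intervals_on_same_side_laminar
    (H : DoubleHistogram) (v w : ℝ × ℝ) (hv : v ∈ H.verts) (hw : w ∈ H.verts)
    (hside : 0 < v.2 * w.2) :
    H.Iv v ∩ H.Iv w = ∅ ∨ H.Iv v ⊆ H.Iv w ∨ H.Iv w ⊆ H.Iv v := by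
  have hvr := H.verts_sub_region hv
  have hwr := H.verts_sub_region hw
  have lv := H.lhit_le hvr
  have rv := H.le_rhit hvr
  have lw := H.lhit_le hwr
  have rw' := H.le_rhit hwr
  have lpv := H.lpt_fst v
  have rpv := H.rpt_fst v
  have lpw := H.lpt_fst w
  have rpw := H.rpt_fst w
  by_cases hdis : H.rhit v < H.lhit w ∨ H.rhit w < H.lhit v
  · left
    rw [Set.eq_empty_iff_forall_notMem]
    intro u hu
    simp only [DoubleHistogram.Iv, DoubleHistogram.ivl, mem_inter_iff, mem_setOf_eq] at hu
    obtain ⟨⟨_, a1, a2⟩, _, b1, b2⟩ := hu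
    rw [lpv] at a1; rw [rpv] at a2; rw [lpw] at b1; rw [rpw] at b2
    rcases hdis with h | h <;> linarith
  · push_neg at hdis
    obtain ⟨hd1, hd2⟩ := hdis
    have h1 : H.lhit v ≤ max (H.lhit v) (H.lhit w) := le_max_left _ _
    have h3 : H.lhit w ≤ max (H.lhit v) (H.lhit w) := le_max_right _ _
    have h2 : max (H.lhit v) (H.lhit w) ≤ H.rhit v := max_le (le_trans lv rv) hd1
    have h4 : max (H.lhit v) (H.lhit w) ≤ H.rhit w := max_le hd2 (le_trans lw rw')
    have hcmp : (min 0 w.2 ≤ v.2 ∧ v.2 ≤ max 0 w.2) ∨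
        (min 0 v.2 ≤ w.2 ∧ w.2 ≤ max 0 v.2) := by
      rcases mul_pos_iff.mp hside with ⟨p1, p2⟩ | ⟨p1, p2⟩
      · rcases le_total v.2 w.2 with h | h
        · exact Or.inl ⟨le_trans (min_le_left _ _) p1.le, le_trans h (le_max_right _ _)⟩
        · exact Or.inr ⟨le_trans (min_le_left _ _) p2.le, le_trans h (le_max_right _ _)⟩
      · rcases le_total v.2 w.2 with h | h
        · exact Or.inr ⟨le_trans (min_le_right _ _) h, le_trans p2.le (le_max_left _ _)⟩
        · exact Or.inl ⟨le_trans (min_le_right _ _) h, le_trans p1.le (le_max_left _ _)⟩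
    rcases hcmp with ⟨ha, hb⟩ | ⟨ha, hb⟩
    · obtain ⟨k1, k2⟩ := H.key hvr hwr ha hb h1 h2 h3 h4
      refine Or.inr (Or.inr ?_)
      rintro u hu
      simp only [DoubleHistogram.Iv, DoubleHistogram.ivl, mem_setOf_eq] at hu ⊢
      obtain ⟨hu0, u1, u2⟩ := hu
      rw [lpw] at u1; rw [rpw] at u2
      exact ⟨hu0, by rw [lpv]; linarith, by rw [rpv]; linarith⟩
    · obtain ⟨k1, k2⟩ := H.key hwr hvr ha hb h3 h4 h1 h2
      refine Or.inr (Or.inl ?_)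
      rintro u hu
      simp only [DoubleHistogram.Iv, DoubleHistogram.ivl, mem_setOf_eq] at hu ⊢
      obtain ⟨hu0, u1, u2⟩ := hu
      rw [lpv] at u1; rw [rpv] at u2
      exact ⟨hu0, by rw [lpw]; linarith, by rw [rpw]; linarith⟩
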